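/- For any isotropic subspace S of V_ℂ ⊕ V*_ℂ (with respect to the canonical pairing), the intersection S ∩ V_ℂ equals the annihilator of the projection of S^⊥ to V*_ℂ: S ∩ V_ℂ = Ann(pr_{V*_ℂ}(S^⊥)). -/

import Mathlib

open Module in
noncomputable def canB (V : Type*) [AddCommGroup V] [Module ℝ V] :
    LinearMap.BilinForm ℝ ((V × V) × (Dual ℝ V × Dual ℝ V)) :=
  LinearMap.mk₂ ℝ
    (fun e f => (1/2 : ℝ) * (e.2.1 f.1.1 - e.2.2 f.1.2 + f.2.1 e.1.1 - f.2.2 e.1.2))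
    (by intros; simp; ring)
    (by intros; simp; ring)
    (by intros; simp [map_add]; ring)
    (by intros; simp [map_smul]; ring)

open Module in
theorem canB_apply {V : Type*} [AddCommGroup V] [Module ℝ V]
    (e f : (V × V) × (Dual ℝ V × Dual ℝ V)) :
    canB V e f = (1/2 : ℝ) * (e.2.1 f.1.1 - e.2.2 f.1.2 + f.2.1 e.1.1 - f.2.2 e.1.2) := rfl

open Module in
theorem canB_symm {V : Type*} [AddCommGroup V] [Module ℝ V]
    (e f : (V × V) × (Dual ℝ V × Dual ℝ V)) : canB V e f = canB V f e := by
  simp [canB_apply]; ring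

open Module in
theorem canB_refl {V : Type*} [AddCommGroup V] [Module ℝ V] :
    (canB V).IsRefl := fun e f h => by rw [canB_symm] at h; exact h

open Module in
theorem canB_nondeg {V : Type*} [AddCommGroup V] [Module ℝ V] [FiniteDimensional ℝ V] :
    (canB V).Nondegenerate := by
  refine (LinearMap.IsRefl.nondegenerate_iff_separatingLeft (B := canB V) canB_refl).mpr ?_
  intro e h
  have h1 : e.2.1 = 0 := by
    ext x
    have := h ((x, 0), 0)
    simp [canB_apply] at this
    simpa using this
  have h2 : e.2.2 = 0 := by
    ext y
    have := h ((0, y), 0)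
    simp [canB_apply] at this
    simpa using this
  have h3 : e.1.1 = 0 := by
    rw [← Module.forall_dual_apply_eq_zero_iff ℝ]
    intro ξ
    have := h (0, (ξ, 0))
    simp [canB_apply] at this
    simpa using this
  have h4 : e.1.2 = 0 := by
    rw [← Module.forall_dual_apply_eq_zero_iff ℝ]
    intro η
    have := h (0, (0, η))
    simp [canB_apply] at this
    simpa using this
  exact Prod.ext (Prod.ext h3 h4) (Prod.ext h1 h2)

/-- For an isotropic complex subspace `S` of `V_ℂ ⊕ V*_ℂ` (modeled on pairs
`(re, im)`) with respect to the canonical symmetric pairing, the intersection `S ∩ V_ℂ`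
equals the annihilator of the projection of `S^⊥` to `V*_ℂ`. -/
theorem isotropic_intersection_annihilator
    {V : Type*} [AddCommGroup V] [Module ℝ V] [FiniteDimensional ℝ V]
    (S : Submodule ℝ ((V × V) × (Module.Dual ℝ V × Module.Dual ℝ V)))
    (ev : (Module.Dual ℝ V × Module.Dual ℝ V) → V × V → ℂ)
    (hev : ∀ (η : Module.Dual ℝ V × Module.Dual ℝ V) (X : V × V),
      ev η X = ((η.1 X.1 - η.2 X.2 : ℝ) : ℂ) + ((η.2 X.1 + η.1 X.2 : ℝ) : ℂ) * Complex.I)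
    (pairing : ((V × V) × (Module.Dual ℝ V × Module.Dual ℝ V)) →
      ((V × V) × (Module.Dual ℝ V × Module.Dual ℝ V)) → ℂ)
    (hpair : ∀ e f, pairing e f = (1 / 2 : ℂ) * (ev e.2 f.1 + ev f.2 e.1))
    (hJ : ∀ e ∈ S, (((-e.1.2, e.1.1), (-e.2.2, e.2.1)) :
      (V × V) × (Module.Dual ℝ V × Module.Dual ℝ V)) ∈ S)
    (hiso : ∀ e ∈ S, ∀ f ∈ S, pairing e f = 0) :
    {e : (V × V) × (Module.Dual ℝ V × Module.Dual ℝ V) | e ∈ S ∧ e.2 = 0} =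
      {e : (V × V) × (Module.Dual ℝ V × Module.Dual ℝ V) | e.2 = 0 ∧
        ∀ f : (V × V) × (Module.Dual ℝ V × Module.Dual ℝ V),
          (∀ s ∈ S, pairing s f = 0) → ev f.2 e.1 = 0} := by
  -- representation of the complex pairing via the real bilinear form `canB`
  have hrep : ∀ e f : (V × V) × (Module.Dual ℝ V × Module.Dual ℝ V),
      pairing e f = (canB V e f : ℝ) -
        ((canB V (((-e.1.2, e.1.1), (-e.2.2, e.2.1))) f : ℝ) : ℂ) * Complex.I := by
    intro e f
    rw [hpair, hev, hev]
    simp only [canB_apply, Complex.ext_iff, Complex.add_re, Complex.sub_re, Complex.mul_re,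
      Complex.mul_im, Complex.add_im, Complex.sub_im, Complex.ofReal_re, Complex.ofReal_im,
      Complex.I_re, Complex.I_im, Complex.one_re, Complex.one_im, Complex.div_re,
      Complex.div_im, Complex.normSq, MonoidWithZeroHom.coe_mk, ZeroHom.coe_mk,
      LinearMap.neg_apply, Complex.re_ofNat, Complex.im_ofNat, map_neg, Prod.fst, Prod.snd]
    norm_num
    constructor <;> ring
  -- the complex perp of S coincides with the `canB`-orthogonal of S
  have hperp : ∀ f, (∀ s ∈ S, pairing s f = 0) ↔ f ∈ (canB V).orthogonal S := by
    intro f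
    constructor
    · intro h
      rw [LinearMap.BilinForm.mem_orthogonal_iff]
      intro s hs
      have h1 := h s hs
      rw [hrep] at h1
      have := congrArg Complex.re h1
      simpa [LinearMap.BilinForm.IsOrtho] using this
    · intro h s hs
      have h1 : canB V s f = 0 := h s hs
      have h2 : canB V (((-s.1.2, s.1.1), (-s.2.2, s.2.1))) f = 0 := h _ (hJ s hs)
      rw [hrep, h1, h2]
      simp
  ext e
  simp only [Set.mem_setOf_eq]
  constructor
  · rintro ⟨heS, he2⟩
    refine ⟨he2, fun f hf => ?_⟩
    have h1 := hf e heS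
    rw [hpair] at h1
    have h2 : ev e.2 f.1 = 0 := by
      rw [hev, he2]; simp
    rw [h2, zero_add] at h1
    have : (1 / 2 : ℂ) ≠ 0 := by norm_num
    exact (mul_eq_zero.mp h1).resolve_left this
  · rintro ⟨he2, h⟩
    refine ⟨?_, he2⟩
    rw [← LinearMap.BilinForm.orthogonal_orthogonal (canB_nondeg (V := V)) canB_refl S]
    rw [LinearMap.BilinForm.mem_orthogonal_iff]
    intro f hf
    have hf' : ∀ s ∈ S, pairing s f = 0 := (hperp f).mpr hf
    have h1 : ev f.2 e.1 = 0 := h f hf'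
    have h2 : ev e.2 f.1 = 0 := by rw [hev, he2]; simp
    have h3 : pairing f e = 0 := by rw [hpair, h1, h2]; simp
    rw [hrep] at h3
    have := congrArg Complex.re h3
    simpa [LinearMap.BilinForm.IsOrtho] using this
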